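/- Let G be a finite simple graph on n vertices. Then the coefficients of the co-adjoint polynomial alternate in sign: for every 1 ≤ k ≤ n, (−1)^{n−k} · t_k(G) ≥ 0; moreover t_n(G) = 1, so P(G,x) is a monic polynomial of degree n. -/

import Mathlib

open scoped Classical

noncomputable section

/-- Number of connected components of the spanning subgraph with edge set `A`. -/
def numComp {V : Type*} (A : Finset (Sym2 V)) : ℕ :=
  Nat.card (SimpleGraph.fromEdgeSet (↑A : Set (Sym2 V))).ConnectedComponent

/-- `t_k(G) = 2^{-(n-k)} ∑_{A ⊆ E, k(A) = k} (-2)^{|A|}`, where `n = |V|`;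
these are the coefficients of the co-adjoint polynomial `P(G,x) = ∑_{k=1}^n t_k(G) x^k`. -/
def tcoef {V : Type*} [Fintype V] (G : SimpleGraph V) (k : ℕ) : ℚ :=
  (2 : ℚ) ^ ((k : ℤ) - (Fintype.card V : ℤ)) *
    ∑ A ∈ G.edgeFinset.powerset.filter (fun A => numComp A = k), (-2 : ℚ) ^ A.card

set_option linter.unusedSectionVars false
set_option linter.unreachableTactic false
set_option linter.unusedTactic false

namespace CoAdj
open SimpleGraph Finset

variable {V : Type*}

lemma reach_map {H1 H2 : SimpleGraph V} (f : V → V)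
    (h : ∀ x y, H1.Adj x y → H2.Reachable (f x) (f y)) :
    ∀ {x y}, H1.Reachable x y → H2.Reachable (f x) (f y) := by
  intro x y hr
  obtain ⟨w⟩ := hr
  induction w with
  | nil => exact Reachable.refl _
  | cons ha _ ih => exact (h _ _ ha).trans ih

lemma reach_of_adj_imp {H1 H2 : SimpleGraph V}
    (h : ∀ x y, H1.Adj x y → H2.Reachable x y) {x y} (hr : H1.Reachable x y) :
    H2.Reachable x y := reach_map id h hr

lemma numComp_congr {A B : Finset (Sym2 V)}
    (h : ∀ x y : V, (SimpleGraph.fromEdgeSet (↑A : Set (Sym2 V))).Reachable x y ↔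
      (SimpleGraph.fromEdgeSet (↑B : Set (Sym2 V))).Reachable x y) :
    numComp A = numComp B :=
  Nat.card_congr (Quot.congr (Equiv.refl V) (fun a b => by simpa using h a b))

lemma numComp_le [Fintype V] (A : Finset (Sym2 V)) : numComp A ≤ Fintype.card V := by
  have : numComp A ≤ Nat.card V :=
    Nat.card_le_card_of_surjective (Quot.mk _) Quot.mk_surjective
  simpa [Nat.card_eq_fintype_card] using this

lemma numComp_empty [Fintype V] : numComp (∅ : Finset (Sym2 V)) = Fintype.card V := by
  unfold numComp
  rw [Finset.coe_empty, SimpleGraph.fromEdgeSet_empty]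
  have e : (⊥ : SimpleGraph V).ConnectedComponent ≃ V :=
    { toFun := Quot.lift id (fun a b h => SimpleGraph.reachable_bot.mp h)
      invFun := fun v => Quot.mk _ v
      left_inv := by apply Quot.ind; intro a; rfl
      right_inv := fun v => rfl }
  rw [Nat.card_congr e, Nat.card_eq_fintype_card]

lemma numComp_lt [Fintype V] {A : Finset (Sym2 V)} {x y : V} (hxy : x ≠ y)
    (hmem : s(x,y) ∈ A) : numComp A < Fintype.card V := by
  set H := SimpleGraph.fromEdgeSet (↑A : Set (Sym2 V)) with hH
  have hadj : H.Adj x y := by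
    rw [hH, SimpleGraph.fromEdgeSet_adj]
    exact ⟨by exact_mod_cast hmem, hxy⟩
  have : Fintype H.ConnectedComponent := Fintype.ofFinite _
  have hlt : Fintype.card H.ConnectedComponent < Fintype.card V :=
    Fintype.card_lt_of_surjective_not_injective (Quot.mk _) Quot.mk_surjective (by
      intro hinj
      exact hxy (hinj (Quot.sound hadj.reachable)))
  have hnc : numComp A = Fintype.card H.ConnectedComponent := by
    rw [numComp, ← hH, Nat.card_eq_fintype_card]
  omega


/-- contraction: `φ` sends `v` to `u`, everything else fixed. -/
lemma numComp_contract [Fintype V] {u v : V} (huv : u ≠ v) (A : Finset (Sym2 V))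
    (hd : ∀ f ∈ A, ¬ f.IsDiag) (he : s(u,v) ∉ A) :
    numComp (insert s(u,v) A) + 1
      = numComp (A.image (Sym2.map (fun x => if x = v then u else x))) := by
  set φ : V → V := fun x => if x = v then u else x with hφ
  have hφv : φ v = u := by simp [hφ]
  have hφu : φ u = u := by simp [hφ, huv]
  have hφne : ∀ x, x ≠ v → φ x = x := fun x hx => by simp [hφ, hx]
  have hφnev : ∀ x, φ x ≠ v := by
    intro x
    by_cases hx : x = v
    · rw [hx, hφv]; exact huv
    · rw [hφne x hx]; exact hx
  set H1 := SimpleGraph.fromEdgeSet (↑(insert s(u,v) A) : Set (Sym2 V)) with hH1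
  set H2 := SimpleGraph.fromEdgeSet (↑(A.image (Sym2.map φ)) : Set (Sym2 V)) with hH2
  -- H1 adjacency facts
  have hH1adj : ∀ x y, H1.Adj x y ↔ (s(x,y) = s(u,v) ∨ s(x,y) ∈ A) ∧ x ≠ y := by
    intro x y
    rw [hH1, SimpleGraph.fromEdgeSet_adj]
    simp
  have hH1uv : H1.Adj u v := (hH1adj u v).mpr ⟨Or.inl rfl, huv⟩
  have hH1φ : ∀ x, H1.Reachable (φ x) x := by
    intro x
    by_cases hx : x = v
    · rw [hx, hφv]; exact hH1uv.reachable
    · rw [hφne x hx]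
  -- step property for φ
  have hstep : ∀ x y, H1.Adj x y → H2.Reachable (φ x) (φ y) := by
    intro x y hxy
    rw [hH1adj] at hxy
    obtain ⟨hmem | hmem, hne⟩ := hxy
    · -- s(x,y) = s(u,v) : φ collapses both to u
      rw [Sym2.eq_iff] at hmem
      rcases hmem with ⟨rfl, rfl⟩ | ⟨rfl, rfl⟩ <;> rw [hφu, hφv]
    · by_cases hcol : φ x = φ y
      · rw [hcol]
      · refine SimpleGraph.Adj.reachable ?_
        rw [hH2, SimpleGraph.fromEdgeSet_adj]
        refine ⟨?_, hcol⟩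
        have : Sym2.map φ s(x,y) ∈ A.image (Sym2.map φ) :=
          Finset.mem_image_of_mem _ hmem
        simpa using this
  -- H2 edges: endpoints are not v, and are H1-reachable
  have hH2adj : ∀ x y, H2.Adj x y → x ≠ v ∧ y ≠ v ∧ H1.Reachable x y := by
    intro x y hxy
    rw [hH2, SimpleGraph.fromEdgeSet_adj] at hxy
    obtain ⟨hmem, hne⟩ := hxy
    have : s(x,y) ∈ A.image (Sym2.map φ) := by simpa using hmem
    obtain ⟨f, hf, hfe⟩ := Finset.mem_image.mp this
    induction f using Sym2.ind with
    | _ a b =>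
      rw [Sym2.map_pair_eq, Sym2.eq_iff] at hfe
      have hab : H1.Adj a b := by
        rw [hH1adj]
        exact ⟨Or.inr hf, fun h => hd _ hf (by rw [h]; exact Sym2.mk_isDiag_iff.mpr rfl)⟩
      have hreach : H1.Reachable (φ a) (φ b) :=
        (hH1φ a).trans (hab.reachable.trans (hH1φ b).symm)
      rcases hfe with ⟨ha, hb⟩ | ⟨ha, hb⟩
      · exact ⟨ha ▸ hφnev a, hb ▸ hφnev b, ha ▸ hb ▸ hreach⟩
      · exact ⟨hb ▸ hφnev b, ha ▸ hφnev a, hb ▸ ha ▸ hreach.symm⟩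
  have hH2toH1 : ∀ x y, H2.Reachable x y → H1.Reachable x y :=
    fun x y h => reach_of_adj_imp (fun a b hab => (hH2adj a b hab).2.2) h
  have hviso : ∀ y, H2.Reachable v y → y = v := by
    intro y hr
    obtain ⟨w⟩ := hr
    cases w with
    | nil => rfl
    | cons h p => exact absurd rfl (hH2adj _ _ h).1
  -- the equivalence
  have hliftF : ∀ a b : V, H2.Reachable a b →
      (if a = v then (Sum.inr Unit.unit : H1.ConnectedComponent ⊕ Unit)
        else Sum.inl (Quot.mk _ a)) =
      (if b = v then Sum.inr Unit.unit else Sum.inl (Quot.mk _ b)) := by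
    intro a b hab
    by_cases hav : a = v
    · have : b = v := hviso b (hav ▸ hab)
      simp [hav, this]
      rfl
    · have hbv : b ≠ v := fun h => hav (hviso a (h ▸ hab.symm))
      rw [if_neg hav, if_neg hbv]
      exact congrArg Sum.inl (Quot.sound (hH2toH1 a b hab))
  have hliftG : ∀ a b : V, H1.Reachable a b →
      (Quot.mk H2.Reachable (φ a)) = Quot.mk H2.Reachable (φ b) := by
    intro a b hab
    exact Quot.sound (reach_map φ hstep hab)
  have hequiv : H2.ConnectedComponent ≃ H1.ConnectedComponent ⊕ Unit := by
    refine ⟨Quot.lift (fun x => if x = v then Sum.inr Unit.unit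
        else Sum.inl (Quot.mk _ x)) hliftF,
      Sum.elim (Quot.lift (fun x => Quot.mk _ (φ x)) hliftG) (fun _ => Quot.mk _ v), ?_, ?_⟩
    · apply Quot.ind
      intro x
      by_cases hx : x = v
      · subst hx
        simp only [Quot.lift_mk, if_pos rfl, Sum.elim_inr, if_true, eq_self_iff_true]
        rfl
      · simp only [Quot.lift_mk, if_neg hx, Sum.elim_inl]
        exact congrArg (Quot.mk _) (hφne x hx)
    · rintro (c | ⟨⟩)
      · revert c
        apply Quot.ind
        intro x
        exact (if_neg (hφnev x)).trans (congrArg Sum.inl (Quot.sound (hH1φ x)))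
      · exact if_pos rfl
  have hcard := Nat.card_congr hequiv
  rw [Nat.card_sum] at hcard
  simp only [Nat.card_unique] at hcard
  rw [numComp, numComp, ← hH1, ← hH2, hcard]


lemma adj_of_mem {S : Finset (Sym2 V)} {p q : V} (h : s(p,q) ∈ S) (hne : p ≠ q) :
    (SimpleGraph.fromEdgeSet (↑S : Set (Sym2 V))).Adj p q := by
  rw [SimpleGraph.fromEdgeSet_adj]
  exact ⟨by exact_mod_cast h, hne⟩

lemma numComp_congr_adj {S T : Finset (Sym2 V)}
    (hST : ∀ p q, (SimpleGraph.fromEdgeSet (↑S : Set (Sym2 V))).Adj p q →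
      (SimpleGraph.fromEdgeSet (↑T : Set (Sym2 V))).Reachable p q)
    (hTS : ∀ p q, (SimpleGraph.fromEdgeSet (↑T : Set (Sym2 V))).Adj p q →
      (SimpleGraph.fromEdgeSet (↑S : Set (Sym2 V))).Reachable p q) :
    numComp S = numComp T := by
  refine Nat.card_congr (Quot.congr (Equiv.refl V) (fun a b => ?_))
  simp only [Equiv.refl_apply]
  exact ⟨fun h => reach_of_adj_imp hST h, fun h => reach_of_adj_imp hTS h⟩

/-- adjacency in `fromEdgeSet` of a finset, unfolded. -/
lemma adj_iff {S : Finset (Sym2 V)} {p q : V} :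
    (SimpleGraph.fromEdgeSet (↑S : Set (Sym2 V))).Adj p q ↔ s(p,q) ∈ S ∧ p ≠ q := by
  rw [SimpleGraph.fromEdgeSet_adj]; simp

/-- with `e = s(u,v)` present, the edges `s(u,x)`, `s(v,x)` generate the same
reachability in any combination (as long as at least one is there). -/
lemma numComp_tri1 {u v x : V} (huv : u ≠ v) (hux : u ≠ x) (hvx : v ≠ x)
    (A : Finset (Sym2 V)) :
    numComp (insert s(u,v) (insert s(u,x) A))
      = numComp (insert s(u,v) (insert s(u,x) (insert s(v,x) A))) := by
  apply numComp_congr_adj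
  · intro p q h
    rw [adj_iff] at h
    refine SimpleGraph.Adj.reachable ?_
    rw [adj_iff]
    refine ⟨?_, h.2⟩
    have := h.1
    simp only [Finset.mem_insert] at this ⊢
    tauto
  · intro p q h
    rw [adj_iff] at h
    obtain ⟨hm, hne⟩ := h
    simp only [Finset.mem_insert] at hm
    rcases hm with h1 | h2 | h3 | h4
    · exact (adj_of_mem (by simp [h1]) hne).reachable
    · exact (adj_of_mem (by simp [h2]) hne).reachable
    · -- s(p,q) = s(v,x) : go p ~ ... via u
      have hvu : (SimpleGraph.fromEdgeSet
          (↑(insert s(u,v) (insert s(u,x) A)) : Set (Sym2 V))).Adj v u :=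
        adj_of_mem (by simp [Sym2.eq_swap]) huv.symm
      have huxadj : (SimpleGraph.fromEdgeSet
          (↑(insert s(u,v) (insert s(u,x) A)) : Set (Sym2 V))).Adj u x :=
        adj_of_mem (by simp) hux
      have hreach : (SimpleGraph.fromEdgeSet
          (↑(insert s(u,v) (insert s(u,x) A)) : Set (Sym2 V))).Reachable v x :=
        hvu.reachable.trans huxadj.reachable
      rw [Sym2.eq_iff] at h3
      rcases h3 with ⟨rfl, rfl⟩ | ⟨rfl, rfl⟩
      · exact hreach
      · exact hreach.symm
    · exact (adj_of_mem (by simp [h4]) hne).reachable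

lemma numComp_tri2 {u v x : V} (huv : u ≠ v) (hux : u ≠ x) (hvx : v ≠ x)
    (A : Finset (Sym2 V)) :
    numComp (insert s(u,v) (insert s(v,x) A))
      = numComp (insert s(u,v) (insert s(u,x) (insert s(v,x) A))) := by
  have h1 := numComp_tri1 huv.symm hvx hux A
  have h2 := numComp_tri1 huv hux hvx (insert s(v,x) A)
  -- h1 : numComp (insert s(v,u) (insert s(v,x) A)) = numComp (insert s(v,u) (insert s(v,x) (insert s(u,x) A)))
  rw [show s(v,u) = s(u,v) from Sym2.eq_swap] at h1
  rw [Finset.insert_comm s(v,x) s(u,x)] at h1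
  -- now h1 matches modulo insert-order: RHS of h2 has insert s(u,x) (insert s(v,x) A)
  rw [h1]


section Contract
variable [Fintype V] {u v : V}

/-- on a "clean" edge set (no doubled pair `s(u,x)`,`s(v,x)`), the contraction map
is injective. -/
lemma injOn_contract (huv : u ≠ v) {F : Finset (Sym2 V)}
    (hd : ∀ f ∈ F, ¬ f.IsDiag) (he : s(u,v) ∉ F)
    (hclean : ∀ x : V, ¬ (s(u,x) ∈ F ∧ s(v,x) ∈ F)) :
    Set.InjOn (Sym2.map (fun x => if x = v then u else x)) ↑F := by
  set φ : V → V := fun x => if x = v then u else x with hφ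
  have hmerge : ∀ p q : V, φ p = φ q → p = q ∨ (p = u ∧ q = v) ∨ (p = v ∧ q = u) := by
    intro p q h
    simp only [hφ] at h
    split_ifs at h with h1 h2 h3
    · exact Or.inl (h1.trans h2.symm)
    · exact Or.inr (Or.inr ⟨h1, h.symm⟩)
    · exact Or.inr (Or.inl ⟨h, h3⟩)
    · exact Or.inl h
  -- the core claim, stated for ordered representatives
  have claim : ∀ a b c d : V, s(a,b) ∈ F → s(c,d) ∈ F → φ a = φ c → φ b = φ d →
      s(a,b) = s(c,d) := by
    intro a b c d hab hcd hac hbd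
    rcases hmerge a c hac with rfl | ⟨rfl, rfl⟩ | ⟨rfl, rfl⟩
    · rcases hmerge b d hbd with rfl | ⟨rfl, rfl⟩ | ⟨rfl, rfl⟩
      · rfl
      · exact absurd ⟨by rwa [Sym2.eq_swap] at hab, by rwa [Sym2.eq_swap] at hcd⟩ (hclean a)
      · exact absurd ⟨by rwa [Sym2.eq_swap] at hcd, by rwa [Sym2.eq_swap] at hab⟩ (hclean a)
    · rcases hmerge b d hbd with rfl | ⟨rfl, rfl⟩ | ⟨rfl, rfl⟩
      · exact absurd ⟨hab, hcd⟩ (hclean b)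
      · exact absurd (hd _ hab) (by simp)
      · first | exact absurd hab he | exact absurd (by rwa [Sym2.eq_swap] at hab) he
    · rcases hmerge b d hbd with rfl | ⟨rfl, rfl⟩ | ⟨rfl, rfl⟩
      · exact absurd ⟨hcd, hab⟩ (hclean b)
      · first | exact absurd hab he | exact absurd (by rwa [Sym2.eq_swap] at hab) he
      · exact absurd (hd _ hab) (by simp)
  intro f hf g hg hfg
  induction f using Sym2.ind with
  | _ a b =>
    induction g using Sym2.ind with
    | _ c d =>
      rw [Sym2.map_pair_eq, Sym2.map_pair_eq, Sym2.eq_iff] at hfg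
      rcases hfg with ⟨h1, h2⟩ | ⟨h1, h2⟩
      · exact claim a b c d (by exact_mod_cast hf) (by exact_mod_cast hg) h1 h2
      · have := claim a b d c (by exact_mod_cast hf)
          (by rw [Sym2.eq_swap] at hg; exact_mod_cast hg) h1 h2
        rw [this, Sym2.eq_swap]

lemma contract_sum_clean (huv : u ≠ v) (k : ℕ)
    (F : Finset (Sym2 V)) (hd : ∀ f ∈ F, ¬ f.IsDiag) (he : s(u,v) ∉ F)
    (hclean : ∀ x : V, ¬ (s(u,x) ∈ F ∧ s(v,x) ∈ F)) :
    ∑ A ∈ F.powerset, (if numComp (insert s(u,v) A) = k then (-2:ℚ)^A.card else 0)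
      = ∑ B ∈ (F.image (Sym2.map (fun x => if x = v then u else x))).powerset,
          (if numComp B = k + 1 then (-2:ℚ)^B.card else 0) := by
  set φ : V → V := fun x => if x = v then u else x with hφ
  set m : Sym2 V → Sym2 V := Sym2.map φ with hm
  have hinj : Set.InjOn m ↑F := injOn_contract huv hd he hclean
  have hsub : ∀ A₁ A₂ : Finset (Sym2 V), A₁ ⊆ F → A₂ ⊆ F →
      A₁.image m = A₂.image m → A₁ ⊆ A₂ := by
    intro A₁ A₂ h₁ h₂ him x hx
    have : m x ∈ A₂.image m := by rw [← him]; exact Finset.mem_image_of_mem _ hx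
    obtain ⟨y, hy, hxy⟩ := Finset.mem_image.mp this
    have : y = x := hinj (h₂ hy) (h₁ hx) hxy
    rwa [← this]
  refine Finset.sum_bij (fun A _ => A.image m) ?_ ?_ ?_ ?_
  · intro A hA
    rw [Finset.mem_powerset] at hA ⊢
    exact Finset.image_subset_image hA
  · intro A₁ h₁ A₂ h₂ him
    rw [Finset.mem_powerset] at h₁ h₂
    exact Finset.Subset.antisymm (hsub _ _ h₁ h₂ him) (hsub _ _ h₂ h₁ him.symm)
  · intro B hB
    rw [Finset.mem_powerset] at hB
    refine ⟨F.filter (fun f => m f ∈ B), Finset.mem_powerset.mpr (Finset.filter_subset _ _), ?_⟩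
    apply Finset.Subset.antisymm
    · intro x hx
      obtain ⟨y, hy, hxy⟩ := Finset.mem_image.mp hx
      rw [Finset.mem_filter] at hy
      rw [← hxy]
      exact hy.2
    · intro b hb
      obtain ⟨f, hf, hfb⟩ := Finset.mem_image.mp (hB hb)
      rw [← hfb]
      exact Finset.mem_image_of_mem _ (Finset.mem_filter.mpr ⟨hf, by rw [hfb]; exact hb⟩)
  · intro A hA
    rw [Finset.mem_powerset] at hA
    have hcontr := numComp_contract huv A (fun f hf => hd f (hA hf))
      (fun hmem => he (hA hmem))
    rw [← hφ, ← hm] at hcontr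
    have hcard : (A.image m).card = A.card :=
      Finset.card_image_of_injOn (hinj.mono (by exact_mod_cast hA))
    show _ = if numComp (A.image m) = k + 1 then (-2:ℚ)^(A.image m).card else 0
    rw [hcard]
    exact if_congr (by omega) rfl rfl

end Contract


section Contract2
variable [Fintype V] {u v : V}

lemma merge_cases (huv : u ≠ v) (p q : V)
    (h : (if p = v then u else p) = (if q = v then u else q)) :
    p = q ∨ (p = u ∧ q = v) ∨ (p = v ∧ q = u) := by
  split_ifs at h with h1 h2 h3
  · exact Or.inl (h1.trans h2.symm)
  · exact Or.inr (Or.inr ⟨h1, h.symm⟩)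
  · exact Or.inr (Or.inl ⟨h, h3⟩)
  · exact Or.inl h

lemma nodiag_map (huv : u ≠ v) {g : Sym2 V} (hg : ¬ g.IsDiag) (hne : g ≠ s(u,v)) :
    ¬ (Sym2.map (fun x => if x = v then u else x) g).IsDiag := by
  induction g using Sym2.ind with
  | _ p q =>
    rw [Sym2.map_pair_eq, Sym2.mk_isDiag_iff]
    intro hdiag
    rcases merge_cases huv p q hdiag with rfl | ⟨rfl, rfl⟩ | ⟨rfl, rfl⟩
    · exact hg (Sym2.mk_isDiag_iff.mpr rfl)
    · exact hne rfl
    · exact hne Sym2.eq_swap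

lemma contract_sum (huv : u ≠ v) (k : ℕ) :
    ∀ n (F : Finset (Sym2 V)), F.card ≤ n → (∀ f ∈ F, ¬ f.IsDiag) → s(u,v) ∉ F →
    ∃ B : Finset (Sym2 V), (∀ f ∈ B, ¬ f.IsDiag) ∧ B.card ≤ F.card ∧
      ∑ A ∈ F.powerset, (if numComp (insert s(u,v) A) = k then (-2:ℚ)^A.card else 0)
        = ∑ A ∈ B.powerset, (if numComp A = k + 1 then (-2:ℚ)^A.card else 0) := by
  intro n
  induction n with
  | zero =>
    intro F hcard hd he
    have hF : F = ∅ := Finset.card_eq_zero.mp (Nat.le_zero.mp hcard)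
    subst hF
    refine ⟨Finset.image (Sym2.map (fun x => if x = v then u else x)) ∅,
      ?_, ?_, contract_sum_clean huv k ∅ hd he (by simp)⟩ <;> simp
  | succ n ih =>
    intro F hcard hd he
    by_cases hdup : ∃ x : V, s(u,x) ∈ F ∧ s(v,x) ∈ F
    · obtain ⟨x, hux, hvx⟩ := hdup
      have hxu : x ≠ u := by
        intro h
        exact hd _ hux (by rw [h]; exact Sym2.mk_isDiag_iff.mpr rfl)
      have hxv : x ≠ v := by
        intro h
        exact hd _ hvx (by rw [h]; exact Sym2.mk_isDiag_iff.mpr rfl)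
      have hab : s(u,x) ≠ s(v,x) := by
        intro h
        rw [Sym2.eq_iff] at h
        rcases h with ⟨h1, -⟩ | ⟨-, h2⟩
        · exact huv h1
        · exact hxv h2
      set F' := (F.erase s(u,x)).erase s(v,x) with hF'
      have hbF : s(v,x) ∈ F.erase s(u,x) := Finset.mem_erase.mpr ⟨hab.symm, hvx⟩
      have hins1 : insert s(v,x) F' = F.erase s(u,x) := Finset.insert_erase hbF
      have hins2 : insert s(u,x) (insert s(v,x) F') = F := by
        rw [hins1]; exact Finset.insert_erase hux
      have hanotin : s(u,x) ∉ insert s(v,x) F' := by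
        rw [hins1]; exact Finset.notMem_erase _ _
      have hbnotin : s(v,x) ∉ F' := Finset.notMem_erase _ _
      have hF'sub : F' ⊆ F := fun f hf =>
        Finset.mem_of_mem_erase (Finset.mem_of_mem_erase hf)
      have hF'card : F'.card + 2 = F.card := by
        rw [hF', Finset.card_erase_of_mem hbF, Finset.card_erase_of_mem hux]
        have h2 : 2 ≤ F.card := Finset.one_lt_card.mpr ⟨s(u,x), hux, s(v,x), hvx, hab⟩
        omega
      have hd' : ∀ f ∈ F', ¬ f.IsDiag := fun f hf => hd f (hF'sub hf)
      have he' : s(u,v) ∉ F' := fun h => he (hF'sub h)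
      have hzero : ∀ A ∈ F'.powerset,
          ((if numComp (insert s(u,v) (insert s(v,x) A)) = k then (-2:ℚ)^(insert s(v,x) A).card else 0)
            + ((if numComp (insert s(u,v) (insert s(u,x) A)) = k then (-2:ℚ)^(insert s(u,x) A).card else 0)
              + (if numComp (insert s(u,v) (insert s(u,x) (insert s(v,x) A))) = k then (-2:ℚ)^(insert s(u,x) (insert s(v,x) A)).card else 0))) = 0 := by
        intro A hA
        rw [Finset.mem_powerset] at hA
        have haA : s(u,x) ∉ A := fun h => hanotin (Finset.mem_insert_of_mem (hA h))
        have hbA : s(v,x) ∉ A := fun h => hbnotin (hA h)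
        have haAb : s(u,x) ∉ insert s(v,x) A := by
          rw [Finset.mem_insert]
          push_neg
          exact ⟨hab, haA⟩
        rw [numComp_tri1 huv hxu.symm hxv.symm A, numComp_tri2 huv hxu.symm hxv.symm A,
          Finset.card_insert_of_notMem haA, Finset.card_insert_of_notMem hbA,
          Finset.card_insert_of_notMem haAb, Finset.card_insert_of_notMem hbA]
        by_cases h : numComp (insert s(u,v) (insert s(u,x) (insert s(v,x) A))) = k
        · simp only [if_pos h, pow_succ]
          ring
        · simp only [if_neg h]
          ring
      have hsplit :
          ∑ A ∈ F.powerset, (if numComp (insert s(u,v) A) = k then (-2:ℚ)^A.card else 0)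
            = ∑ A ∈ F'.powerset, (if numComp (insert s(u,v) A) = k then (-2:ℚ)^A.card else 0) := by
        rw [← hins2, Finset.sum_powerset_insert hanotin, Finset.sum_powerset_insert hbnotin,
          Finset.sum_powerset_insert hbnotin]
        have hz := Finset.sum_eq_zero hzero
        rw [Finset.sum_add_distrib, Finset.sum_add_distrib] at hz
        linarith [hz]
      obtain ⟨B, hB1, hB2, hB3⟩ := ih F' (by omega) hd' he'
      exact ⟨B, hB1, by omega, by rw [hsplit, hB3]⟩
    · push_neg at hdup
      refine ⟨_, ?_, Finset.card_image_le,
        contract_sum_clean huv k F hd he (fun x h => (hdup x h.1) h.2)⟩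
      intro f hf
      obtain ⟨g, hg, hfg⟩ := Finset.mem_image.mp hf
      rw [← hfg]
      exact nodiag_map huv (hd g hg) (fun h => he (h ▸ hg))

end Contract2


section Main
variable [Fintype V]

lemma csum_eq_zero_of_gt (E : Finset (Sym2 V)) {k : ℕ} (hk : Fintype.card V < k) :
    ∑ A ∈ E.powerset, (if numComp A = k then (-2:ℚ)^A.card else 0) = 0 :=
  Finset.sum_eq_zero (fun A _ => if_neg (by have := numComp_le A; omega))

lemma key_empty (k : ℕ) :
    0 ≤ (-1:ℚ)^(Fintype.card V - k) *
      ∑ A ∈ (∅ : Finset (Sym2 V)).powerset, (if numComp A = k then (-2:ℚ)^A.card else 0) := by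
  rw [Finset.powerset_empty, Finset.sum_singleton, Finset.card_empty, pow_zero, numComp_empty]
  by_cases h : Fintype.card V = k
  · rw [if_pos h, h, Nat.sub_self, pow_zero]
    norm_num
  · rw [if_neg h, mul_zero]

lemma key : ∀ (n : ℕ) (E : Finset (Sym2 V)), E.card ≤ n → (∀ f ∈ E, ¬ f.IsDiag) →
    ∀ k, 0 ≤ (-1:ℚ)^(Fintype.card V - k) *
      ∑ A ∈ E.powerset, (if numComp A = k then (-2:ℚ)^A.card else 0) := by
  intro n
  induction n with
  | zero =>
    intro E hc hd k
    have hE : E = ∅ := Finset.card_eq_zero.mp (Nat.le_zero.mp hc)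
    subst hE
    exact key_empty k
  | succ n ih =>
    intro E hc hd k
    rcases E.eq_empty_or_nonempty with rfl | ⟨e, he⟩
    · exact key_empty k
    · have hex : ∃ u v : V, u ≠ v ∧ s(u,v) ∈ E := by
        revert he
        induction e using Sym2.ind with
        | _ u v =>
          intro he
          exact ⟨u, v, fun h => hd _ he (by rw [h]; exact Sym2.mk_isDiag_iff.mpr rfl), he⟩
      obtain ⟨u, v, huv, hmem⟩ := hex
      set F := E.erase s(u,v) with hF
      have hE : insert s(u,v) F = E := Finset.insert_erase hmem
      have henf : s(u,v) ∉ F := Finset.notMem_erase _ _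
      have hdF : ∀ f ∈ F, ¬ f.IsDiag := fun f hf => hd f (Finset.mem_of_mem_erase hf)
      have hEpos : 1 ≤ E.card := Finset.card_pos.mpr ⟨_, hmem⟩
      have hFcard : F.card + 1 = E.card := by
        rw [hF, Finset.card_erase_of_mem hmem]
        omega
      obtain ⟨B, hB1, hB2, hB3⟩ := contract_sum huv k F.card F le_rfl hdF henf
      have hsplit :
          ∑ A ∈ E.powerset, (if numComp A = k then (-2:ℚ)^A.card else 0)
            = (∑ A ∈ F.powerset, (if numComp A = k then (-2:ℚ)^A.card else 0))
              + (-2) * ∑ A ∈ B.powerset, (if numComp A = k + 1 then (-2:ℚ)^A.card else 0) := by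
        rw [← hE, Finset.sum_powerset_insert henf, ← hB3, Finset.mul_sum]
        congr 1
        apply Finset.sum_congr rfl
        intro A hA
        rw [Finset.mem_powerset] at hA
        have hnA : s(u,v) ∉ A := fun h => henf (hA h)
        rw [Finset.card_insert_of_notMem hnA]
        by_cases h : numComp (insert s(u,v) A) = k
        · rw [if_pos h, if_pos h, pow_succ]
          ring
        · rw [if_neg h, if_neg h, mul_zero]
      have h1 := ih F (by omega) hdF k
      have h2 := ih B (by omega) hB1 (k + 1)
      rw [hsplit]
      by_cases hk : k < Fintype.card V
      · have hNk : Fintype.card V - k = (Fintype.card V - (k+1)) + 1 := by omega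
        rw [hNk, pow_succ] at h1 ⊢
        nlinarith [h1, h2]
      · have hz : ∑ A ∈ B.powerset, (if numComp A = k + 1 then (-2:ℚ)^A.card else 0) = 0 :=
          csum_eq_zero_of_gt B (by omega)
        rw [hz]
        rw [mul_zero, add_zero]
        exact h1

end Main
end CoAdj

theorem tcoef_alternating_sign_and_monic {V : Type*} [Fintype V] (G : SimpleGraph V) :
    (∀ k : ℕ, 1 ≤ k → k ≤ Fintype.card V →
      0 ≤ (-1 : ℚ) ^ (Fintype.card V - k) * tcoef G k)
    ∧ tcoef G (Fintype.card V) = 1 := by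
  have hd : ∀ f ∈ G.edgeFinset, ¬ f.IsDiag := fun f hf =>
    G.not_isDiag_of_mem_edgeSet (SimpleGraph.mem_edgeFinset.mp hf)
  constructor
  · intro k _ _
    have hkey := CoAdj.key G.edgeFinset.card G.edgeFinset le_rfl hd k
    rw [← Finset.sum_filter] at hkey
    unfold tcoef
    rw [mul_left_comm]
    exact mul_nonneg (le_of_lt (zpow_pos (by norm_num) _)) hkey
  · unfold tcoef
    rw [sub_self, zpow_zero, one_mul]
    have hsingle : G.edgeFinset.powerset.filter (fun A => numComp A = Fintype.card V)
        = {(∅ : Finset (Sym2 V))} := by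
      apply Finset.eq_singleton_iff_unique_mem.mpr
      constructor
      · rw [Finset.mem_filter]
        exact ⟨Finset.empty_mem_powerset _, CoAdj.numComp_empty⟩
      · intro A hA
        rw [Finset.mem_filter, Finset.mem_powerset] at hA
        by_contra hne
        obtain ⟨f, hf⟩ := Finset.nonempty_iff_ne_empty.mpr hne
        have hlt : numComp A < Fintype.card V := by
          have hdf : ¬ f.IsDiag := hd f (hA.1 hf)
          revert hf hdf
          induction f using Sym2.ind with
          | _ x y =>
            intro hf hdf
            have hxy : x ≠ y := fun h => hdf (by rw [h]; exact Sym2.mk_isDiag_iff.mpr rfl)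
            exact CoAdj.numComp_lt hxy hf
        omega
    rw [hsingle, Finset.sum_singleton, Finset.card_empty, pow_zero]
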